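/- Let r > 0 and p ∈ (0,1), and let μ be the zero-truncated negative binomial distribution μ_s = C(s+r−1, s)·(1−p)^r p^s/(1−(1−p)^r) for s ≥ 1, where C(s+r−1,s) = Γ(s+r)/(Γ(r)·s!). Then: (i) the reallocation weight satisfies (s+1)·μ_{s+1}/μ_s = (s+r)·p for every s ≥ 1, a strictly increasing linear function of s (the 'rich-get-richer' rule); (ii) the sequence (s!·μ_s)_{s≥1} is strictly log-convex: (s!μ_s)² < (s−1)!μ_{s−1}·(s+1)!μ_{s+1} for all s ≥ 2, so the corresponding ESC model is balance-averse. -/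

import Mathlib

/-- For the zero-truncated negative binomial cluster-size distribution
`μ_s = C(s+r−1,s)(1−p)^r p^s/(1−(1−p)^r)` with `C(s+r−1,s) = Γ(s+r)/(Γ(r)s!)`:
(i) the reallocation weight `(s+1)μ_{s+1}/μ_s = (s+r)p` is a strictly
increasing linear function of `s` ("rich-get-richer");
(ii) the sequence `(s!·μ_s)` is strictly log-convex, so the ESC model is
balance-averse. -/
theorem truncated_negBinomial_balance_averse
    (r p : ℝ) (hr : 0 < r) (hp : 0 < p) (hp1 : p < 1)
    (μ : ℕ → ℝ)
    (hμ : ∀ s : ℕ, 1 ≤ s → μ s =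
      Real.Gamma ((s : ℝ) + r) / (Real.Gamma r * (Nat.factorial s : ℝ)) *
        ((1 - p) ^ r * p ^ s) / (1 - (1 - p) ^ r)) :
    (∀ s : ℕ, 1 ≤ s →
      ((s : ℝ) + 1) * μ (s + 1) / μ s = ((s : ℝ) + r) * p) ∧
    (∀ s t : ℕ, 1 ≤ s → s < t → ((s : ℝ) + r) * p < ((t : ℝ) + r) * p) ∧
    (∀ s : ℕ, 2 ≤ s →
      ((Nat.factorial s : ℝ) * μ s) ^ 2 <
        ((Nat.factorial (s - 1) : ℝ) * μ (s - 1)) *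
          ((Nat.factorial (s + 1) : ℝ) * μ (s + 1))) := by
  have h1p : (0:ℝ) < 1 - p := by linarith
  have hq : 0 < (1 - p) ^ r := Real.rpow_pos_of_pos h1p r
  have hq1 : (1 - p) ^ r < 1 := Real.rpow_lt_one (le_of_lt h1p) (by linarith) hr
  have hD : 0 < 1 - (1 - p) ^ r := by linarith
  have hGr : 0 < Real.Gamma r := Real.Gamma_pos_of_pos hr
  have hGpos : ∀ x : ℝ, 0 < x → 0 < Real.Gamma x := fun x hx => Real.Gamma_pos_of_pos hx
  have key : ∀ s : ℕ, 1 ≤ s → (Nat.factorial s : ℝ) * μ s =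
      Real.Gamma ((s : ℝ) + r) / Real.Gamma r * ((1 - p) ^ r * p ^ s) / (1 - (1 - p) ^ r) := by
    intro s hs
    rw [hμ s hs]
    have hf : (Nat.factorial s : ℝ) ≠ 0 := by positivity
    field_simp
  refine ⟨?_, ?_, ?_⟩
  · intro s hs
    have hμs : μ s ≠ 0 := by
      rw [hμ s hs]
      have := hGpos ((s:ℝ) + r) (by positivity)
      positivity
    have hrec : Real.Gamma (((s+1 : ℕ) : ℝ) + r) = ((s:ℝ) + r) * Real.Gamma ((s:ℝ) + r) := by
      push_cast
      have h : (s:ℝ) + 1 + r = ((s:ℝ) + r) + 1 := by ring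
      rw [h, Real.Gamma_add_one (by positivity)]
    rw [hμ (s+1) (by omega), hμ s hs, hrec]
    have hf : (Nat.factorial s : ℝ) ≠ 0 := by positivity
    have hf1 : (Nat.factorial (s+1) : ℝ) = ((s:ℝ)+1) * (Nat.factorial s : ℝ) := by
      push_cast [Nat.factorial_succ]; ring
    rw [hf1]
    have hG : Real.Gamma ((s:ℝ) + r) ≠ 0 := ne_of_gt (hGpos _ (by positivity))
    field_simp
    ring
  · intro s t hs hst
    have h : (s:ℝ) < t := by exact_mod_cast hst
    have h2 : (s:ℝ) + r < (t:ℝ) + r := by linarith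
    exact mul_lt_mul_of_pos_right h2 hp
  · intro s hs
    obtain ⟨m, rfl⟩ : ∃ m, s = m + 2 := ⟨s - 2, by omega⟩
    have e1 : m + 2 - 1 = m + 1 := rfl
    rw [e1, key (m+2) (by omega), key (m+1) (by omega), key (m+3) (by omega)]
    set a := Real.Gamma ((m:ℝ) + 1 + r) with ha
    have hapos : 0 < a := hGpos _ (by positivity)
    have h2 : Real.Gamma (((m+2 : ℕ) : ℝ) + r) = ((m:ℝ) + 1 + r) * a := by
      push_cast
      have h : (m:ℝ) + 2 + r = ((m:ℝ) + 1 + r) + 1 := by ring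
      rw [h, Real.Gamma_add_one (by positivity)]
    have h3 : Real.Gamma (((m+3 : ℕ) : ℝ) + r) = ((m:ℝ) + 2 + r) * (((m:ℝ) + 1 + r) * a) := by
      push_cast
      have e : (m:ℝ) + 3 + r = ((m:ℝ) + 2 + r) + 1 := by ring
      rw [e, Real.Gamma_add_one (by positivity)]
      have e2 : (m:ℝ) + 2 + r = ((m:ℝ) + 1 + r) + 1 := by ring
      rw [e2, Real.Gamma_add_one (by positivity)]
    have h1 : Real.Gamma (((m+1 : ℕ) : ℝ) + r) = a := by push_cast; rw [ha]
    rw [h1, h2, h3]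
    have hlt : ((m:ℝ) + 1 + r) < ((m:ℝ) + 2 + r) := by linarith
    have hK : (0:ℝ) < (a / Real.Gamma r * (1-p)^r / (1 - (1-p)^r))^2 * p^(2*m+4) *
        ((m:ℝ)+1+r) := by positivity
    calc (((m:ℝ) + 1 + r) * a / Real.Gamma r * ((1 - p) ^ r * p ^ (m+2)) /
            (1 - (1 - p) ^ r)) ^ 2
        = ((m:ℝ)+1+r) * ((a / Real.Gamma r * (1-p)^r / (1 - (1-p)^r))^2 * p^(2*m+4) *
            ((m:ℝ)+1+r)) := by ring
      _ < ((m:ℝ)+2+r) * ((a / Real.Gamma r * (1-p)^r / (1 - (1-p)^r))^2 * p^(2*m+4) *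
            ((m:ℝ)+1+r)) := mul_lt_mul_of_pos_right hlt hK
      _ = a / Real.Gamma r * ((1 - p) ^ r * p ^ (m+1)) / (1 - (1 - p) ^ r) *
            (((m:ℝ) + 2 + r) * (((m:ℝ) + 1 + r) * a) / Real.Gamma r *
              ((1 - p) ^ r * p ^ (m+3)) / (1 - (1 - p) ^ r)) := by ring
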